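/- Let T and T* be discrete additive subgroups of ℝ^n, set S = T + T*, and suppose: (i) 2⟨s, s′⟩ ∈ ℤ for all s, s′ ∈ S; (ii) ‖t‖² is an even integer for every t ∈ T and every t ∈ T*; (iii) T ∩ T* = 2S; (iv) S contains an element of squared norm 1 and every nonzero s ∈ S satisfies ‖s‖² ≥ 1. Then the Turyn lattice Γ = {(m + t₁, m + t₂, m + t₃) : m ∈ T*, tᵢ ∈ T, t₁ + t₂ + t₃ ∈ 2S} ⊆ S³ is an even lattice (i.e., ‖x‖² is an even integer for all x ∈ Γ) whose minimum distance equals 4: every nonzero x ∈ Γ has ‖x‖² ≥ 4, and some x ∈ Γ has ‖x‖² = 4. -/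

import Mathlib

lemma norm_double_sq {n : ℕ} (u : EuclideanSpace ℝ (Fin n)) :
    ‖u + u‖ ^ 2 = 4 * ‖u‖ ^ 2 := by
  have h : u + u = (2 : ℝ) • u := by
    rw [two_smul]
  rw [h, norm_smul, show ‖(2 : ℝ)‖ = 2 from by norm_num]
  ring

/-- The Turyn lattice `Γ = {(m+t₁, m+t₂, m+t₃) : m ∈ T*, tᵢ ∈ T, t₁+t₂+t₃ ∈ 2S}` is an even
lattice of minimum distance `4`, under the stated hypotheses on `T`, `T*` and `S = T + T*`. -/
theorem stmt_9 {n : ℕ}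
    (T Tstar S : AddSubgroup (EuclideanSpace ℝ (Fin n)))
    [DiscreteTopology T] [DiscreteTopology Tstar]
    (hS : (S : Set (EuclideanSpace ℝ (Fin n))) =
      {x | ∃ t ∈ T, ∃ m ∈ Tstar, x = t + m})
    (hint : ∀ s ∈ S, ∀ s' ∈ S, ∃ z : ℤ, 2 * (inner ℝ s s' : ℝ) = (z : ℝ))
    (hTeven : ∀ t ∈ T, ∃ z : ℤ, Even z ∧ ‖t‖ ^ 2 = (z : ℝ))
    (hTstareven : ∀ t ∈ Tstar, ∃ z : ℤ, Even z ∧ ‖t‖ ^ 2 = (z : ℝ))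
    (hcap : ∀ x : EuclideanSpace ℝ (Fin n), (x ∈ T ∧ x ∈ Tstar) ↔ ∃ s ∈ S, x = s + s)
    (hSone : ∃ s ∈ S, ‖s‖ ^ 2 = 1)
    (hSmin : ∀ s ∈ S, s ≠ (0 : EuclideanSpace ℝ (Fin n)) → 1 ≤ ‖s‖ ^ 2) :
    (∀ x : Fin 3 → EuclideanSpace ℝ (Fin n),
      (∃ m ∈ Tstar, ∃ t : Fin 3 → EuclideanSpace ℝ (Fin n),
        (∀ i, t i ∈ T) ∧ (∃ s ∈ S, t 0 + t 1 + t 2 = s + s) ∧ ∀ i, x i = m + t i) →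
      ∃ z : ℤ, Even z ∧ (∑ i, ‖x i‖ ^ 2) = (z : ℝ)) ∧
    (∀ x : Fin 3 → EuclideanSpace ℝ (Fin n),
      (∃ m ∈ Tstar, ∃ t : Fin 3 → EuclideanSpace ℝ (Fin n),
        (∀ i, t i ∈ T) ∧ (∃ s ∈ S, t 0 + t 1 + t 2 = s + s) ∧ ∀ i, x i = m + t i) →
      x ≠ 0 → (4 : ℝ) ≤ ∑ i, ‖x i‖ ^ 2) ∧
    (∃ x : Fin 3 → EuclideanSpace ℝ (Fin n),
      (∃ m ∈ Tstar, ∃ t : Fin 3 → EuclideanSpace ℝ (Fin n),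
        (∀ i, t i ∈ T) ∧ (∃ s ∈ S, t 0 + t 1 + t 2 = s + s) ∧ ∀ i, x i = m + t i) ∧
      (∑ i, ‖x i‖ ^ 2) = (4 : ℝ)) := by
  have hTsubS : ∀ t ∈ T, t ∈ S := by
    intro t ht
    have : t ∈ (S : Set (EuclideanSpace ℝ (Fin n))) := by
      rw [hS]; exact ⟨t, ht, 0, zero_mem _, by simp⟩
    exact this
  have hTstarsubS : ∀ m ∈ Tstar, m ∈ S := by
    intro m hm
    have : m ∈ (S : Set (EuclideanSpace ℝ (Fin n))) := by
      rw [hS]; exact ⟨0, zero_mem _, m, hm, by simp⟩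
    exact this
  -- evenness key lemma
  have key : ∀ x : Fin 3 → EuclideanSpace ℝ (Fin n),
      (∃ m ∈ Tstar, ∃ t : Fin 3 → EuclideanSpace ℝ (Fin n),
        (∀ i, t i ∈ T) ∧ (∃ s ∈ S, t 0 + t 1 + t 2 = s + s) ∧ ∀ i, x i = m + t i) →
      ∃ z : ℤ, Even z ∧ (∑ i, ‖x i‖ ^ 2) = (z : ℝ) := by
    rintro x ⟨m, hm, t, ht, ⟨s, hs, hsum⟩, hxe⟩
    obtain ⟨zm, hzm, hzm'⟩ := hTstareven m hm
    obtain ⟨z0, hz0, hz0'⟩ := hTeven (t 0) (ht 0)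
    obtain ⟨z1, hz1, hz1'⟩ := hTeven (t 1) (ht 1)
    obtain ⟨z2, hz2, hz2'⟩ := hTeven (t 2) (ht 2)
    obtain ⟨w, hw⟩ := hint m (hTstarsubS m hm) s hs
    refine ⟨3 * zm + 2 * w + (z0 + z1 + z2), ?_, ?_⟩
    · simp only [Int.even_iff] at hzm hz0 hz1 hz2 ⊢
      omega
    · have hip : (inner ℝ m (t 0) : ℝ) + inner ℝ m (t 1) + inner ℝ m (t 2)
          = 2 * (inner ℝ m s : ℝ) := by
        rw [← inner_add_right, ← inner_add_right, hsum, inner_add_right]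
        ring
      rw [Fin.sum_univ_three, hxe 0, hxe 1, hxe 2,
        norm_add_sq_real, norm_add_sq_real, norm_add_sq_real]
      push_cast
      linear_combination 3 * hzm' + hz0' + hz1' + hz2' + 2 * hip + 2 * hw
  refine ⟨key, ?_, ?_⟩
  · -- minimum ≥ 4
    rintro x hΓ hx0
    obtain ⟨z, hz, hzsum⟩ := key x hΓ
    obtain ⟨m, hm, t, ht, ⟨s, hs, hsum⟩, hxe⟩ := hΓ
    have hmS : m ∈ S := hTstarsubS m hm
    have hxiS : ∀ i, x i ∈ S := fun i => by
      rw [hxe i]; exact S.add_mem hmS (hTsubS _ (ht i))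
    have hnn : ∀ i, (0 : ℝ) ≤ ‖x i‖ ^ 2 := fun i => by positivity
    by_cases hall : ∀ i, x i ≠ 0
    · have h3 : (3 : ℝ) ≤ ∑ i, ‖x i‖ ^ 2 := by
        have h := fun i => hSmin (x i) (hxiS i) (hall i)
        rw [Fin.sum_univ_three]
        linarith [h 0, h 1, h 2]
      rw [hzsum] at h3 ⊢
      have h3' : (3 : ℤ) ≤ z := by exact_mod_cast h3
      have h4' : (4 : ℤ) ≤ z := by
        rcases hz with ⟨k, hk⟩; omega
      exact_mod_cast h4'
    · push_neg at hall
      obtain ⟨j, hj⟩ := hall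
      have hmT : m ∈ T := by
        have h := (hxe j).symm.trans hj
        have hmn : m = -(t j) := eq_neg_of_add_eq_zero_left h
        rw [hmn]; exact T.neg_mem (ht j)
      have hxiT : ∀ i, x i ∈ T := fun i => by
        rw [hxe i]; exact T.add_mem hmT (ht i)
      have hge2 : ∀ i, x i ≠ 0 → (2 : ℝ) ≤ ‖x i‖ ^ 2 := by
        intro i hi
        obtain ⟨zi, hzi, hzi'⟩ := hTeven (x i) (hxiT i)
        have hni : 0 < ‖x i‖ := norm_pos_iff.mpr hi
        have hpos : 0 < ‖x i‖ ^ 2 := by positivity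
        rw [hzi'] at hpos ⊢
        have h0 : 0 < zi := by exact_mod_cast hpos
        have h2 : 2 ≤ zi := by rcases hzi with ⟨k, hk⟩; omega
        exact_mod_cast h2
      obtain ⟨k, hk⟩ : ∃ k, x k ≠ 0 := by
        by_contra h; push_neg at h; exact hx0 (funext h)
      by_cases htwo : ∃ l, l ≠ k ∧ x l ≠ 0
      · obtain ⟨l, hlk, hl⟩ := htwo
        have hkl := hge2 k hk
        have hll := hge2 l hl
        have hsub : ∑ i ∈ ({l, k} : Finset (Fin 3)), ‖x i‖ ^ 2 ≤ ∑ i, ‖x i‖ ^ 2 :=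
          Finset.sum_le_sum_of_subset_of_nonneg (Finset.subset_univ _)
            (fun i _ _ => hnn i)
        rw [Finset.sum_pair hlk] at hsub
        linarith
      · push_neg at htwo
        have hxsum : x 0 + x 1 + x 2 = x k := by
          rw [← Fin.sum_univ_three x]
          exact Finset.sum_eq_single_of_mem k (Finset.mem_univ k)
            (fun i _ hik => htwo i hik)
        obtain ⟨s₀, hs₀, hm2⟩ := (hcap m).mp ⟨hmT, hm⟩
        set u : EuclideanSpace ℝ (Fin n) := s₀ + s₀ + s₀ + s with hu_def
        have huS : u ∈ S := S.add_mem (S.add_mem (S.add_mem hs₀ hs₀) hs₀) hs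
        have hxk : x k = u + u := by
          rw [← hxsum, hxe 0, hxe 1, hxe 2]
          have h1 : (m + t 0) + (m + t 1) + (m + t 2)
              = (m + m + m) + (t 0 + t 1 + t 2) := by abel
          rw [h1, hsum, hm2, hu_def]
          abel
        have hune : u ≠ 0 := by
          intro h0
          apply hk
          rw [hxk, h0, add_zero]
        have h4 : (4 : ℝ) ≤ ‖x k‖ ^ 2 := by
          rw [hxk, norm_double_sq]
          have := hSmin u huS hune
          linarith
        have hle : ‖x k‖ ^ 2 ≤ ∑ i, ‖x i‖ ^ 2 :=
          Finset.single_le_sum (fun i _ => hnn i) (Finset.mem_univ k)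
        linarith
  · -- existence of norm-4 vector
    obtain ⟨s, hs, hs1⟩ := hSone
    have hssT : s + s ∈ T := ((hcap (s + s)).mpr ⟨s, hs, rfl⟩).1
    refine ⟨![s + s, 0, 0], ⟨0, zero_mem _, ![s + s, 0, 0], ?_, ⟨s, hs, by simp⟩, ?_⟩, ?_⟩
    · intro i
      fin_cases i <;> simp [hssT, zero_mem]
    · intro i
      fin_cases i <;> simp
    · rw [Fin.sum_univ_three]
      simp only [Matrix.cons_val_zero, Matrix.cons_val_one, Matrix.head_cons,
        Matrix.cons_val_two, Matrix.tail_cons]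
      rw [norm_double_sq, hs1]
      simp
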